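/- arXiv:2208.06927 — 3 statements merged into one kernel-verified Lean document; each statement's English description precedes it below -/
import Mathlib

section
/- Let S be a spanning tree of a connected weighted graph G. S is a maximal (maximum-weight) spanning tree if and only if for every edge e of G not in S, the weight of e is less than or equal to the weight of every edge on the unique cycle formed by adding e to S. -/
open SimpleGraph
open scoped Classical

namespace MaxSpanningTreeAux

variable {V : Type*}

lemma ef_congr {G : SimpleGraph V} (i1 i2 : Fintype G.edgeSet) :
    @SimpleGraph.edgeFinset _ G i1 = @SimpleGraph.edgeFinset _ G i2 := by
  cases Subsingleton.elim i1 i2; rfl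

/-- Along a walk from a vertex satisfying `Q` to one not satisfying `Q`, some edge
crosses from `Q` to `¬ Q`. -/
lemma exists_cross {S : SimpleGraph V} (Q : V → Prop) :
    ∀ {u v : V} (p : S.Walk u v), Q u → ¬ Q v →
      ∃ a b, S.Adj a b ∧ s(a, b) ∈ p.edges ∧ Q a ∧ ¬ Q b := by
  intro u v p
  induction p with
  | nil => intro h h'; exact absurd h h'
  | @cons u x v h q ih =>
    intro hu hv
    by_cases hx : Q x
    · obtain ⟨a, b, hab, hmem, hQ⟩ := ih hx hv
      exact ⟨a, b, hab, by simp [hmem], hQ⟩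
    · exact ⟨u, x, h, by simp, hu, hx⟩

/-- After deleting one edge of a connected graph, every vertex can still reach
one of the two endpoints of the deleted edge. -/
lemma reach_or_step {S : SimpleGraph V} {a b : V} :
    ∀ {x y : V} (_p : S.Walk x y),
      ((S \ fromEdgeSet {s(a, b)}).Reachable y a ∨
        (S \ fromEdgeSet {s(a, b)}).Reachable y b) →
      ((S \ fromEdgeSet {s(a, b)}).Reachable x a ∨
        (S \ fromEdgeSet {s(a, b)}).Reachable x b) := by
  intro x y p
  induction p with
  | nil => exact id
  | @cons x c y h q ih =>
    intro hy
    by_cases hd : s(x, c) = s(a, b)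
    · rw [Sym2.eq_iff] at hd
      rcases hd with ⟨rfl, rfl⟩ | ⟨rfl, rfl⟩
      · exact Or.inl (Reachable.refl _)
      · exact Or.inr (Reachable.refl _)
    · have hadj : (S \ fromEdgeSet {s(a, b)}).Adj x c := by
        rw [sdiff_adj]
        exact ⟨h, by simp [fromEdgeSet_adj, hd]⟩
      rcases ih hy with hr | hr
      · exact Or.inl (hadj.reachable.trans hr)
      · exact Or.inr (hadj.reachable.trans hr)

lemma reach_or {S : SimpleGraph V} (hS : S.Connected) (a b x : V) :
    (S \ fromEdgeSet {s(a, b)}).Reachable x a ∨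
    (S \ fromEdgeSet {s(a, b)}).Reachable x b := by
  obtain ⟨p⟩ := hS x a
  exact reach_or_step p (Or.inl (Reachable.refl _))

/-- Deleting a non-bridge edge (endpoints still reachable) keeps a graph connected. -/
lemma connected_delete {G : SimpleGraph V} {x y : V}
    (hre : (G \ fromEdgeSet {s(x, y)}).Reachable x y) (hG : G.Connected) :
    (G \ fromEdgeSet {s(x, y)}).Connected := by
  rw [connected_iff]
  refine ⟨fun s t => ?_, hG.nonempty⟩
  obtain ⟨p⟩ := hG s t
  induction p with
  | nil => exact Reachable.refl _
  | @cons s c t h q ih =>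
    by_cases hd : s(s, c) = s(x, y)
    · rw [Sym2.eq_iff] at hd
      rcases hd with ⟨rfl, rfl⟩ | ⟨rfl, rfl⟩
      · exact hre.trans ih
      · exact hre.symm.trans ih
    · have hadj : (G \ fromEdgeSet {s(x, y)}).Adj s c := by
        rw [sdiff_adj]
        exact ⟨h, by simp [fromEdgeSet_adj, hd]⟩
      exact hadj.reachable.trans ih

/-- Every connected graph on a finite vertex set has a spanning tree. -/
lemma exists_spanning_tree [Fintype V] (G : SimpleGraph V) (h : G.Connected) :
    ∃ S, S ≤ G ∧ S.IsTree := by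
  suffices H : ∀ (n : ℕ) (G : SimpleGraph V), G.edgeFinset.card = n → G.Connected →
      ∃ S, S ≤ G ∧ S.IsTree by exact H _ G rfl h
  intro n
  induction n using Nat.strong_induction_on with
  | _ n ih =>
    intro G hcard hconn
    by_cases hac : G.IsAcyclic
    · exact ⟨G, le_rfl, ⟨hconn, hac⟩⟩
    · rw [SimpleGraph.IsAcyclic] at hac
      push_neg at hac
      obtain ⟨v, c, hc⟩ := hac
      have hne : c.edges ≠ [] := by
        have h3 := hc.three_le_length
        intro hnil
        rw [← SimpleGraph.Walk.length_edges, hnil] at h3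
        simp at h3
      set e := c.edges.head hne with he_def
      have hmem : e ∈ c.edges := List.head_mem hne
      have heG : e ∈ G.edgeSet := c.edges_subset_edgeSet hmem
      clear_value e
      induction e using Sym2.ind with
      | _ x y =>
        have hre : (G \ fromEdgeSet {s(x, y)}).Reachable x y :=
          (adj_and_reachable_delete_edges_iff_exists_cycle.mpr ⟨v, c, hc, hmem⟩).2
        have hconn' := connected_delete hre hconn
        have hedge : (G \ fromEdgeSet {s(x, y)}).edgeFinset = G.edgeFinset.erase s(x, y) := by
          ext z
          simp only [Set.mem_toFinset, edgeSet_sdiff, edgeSet_fromEdgeSet, Set.mem_diff,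
            Set.mem_singleton_iff, Set.mem_setOf_eq, Finset.mem_erase, mem_edgeFinset]
          constructor
          · rintro ⟨hz, hz'⟩
            refine ⟨fun hzz => hz' ⟨hzz, G.not_isDiag_of_mem_edgeSet hz⟩, hz⟩
          · rintro ⟨hz', hz⟩
            exact ⟨hz, fun hh => hz' hh.1⟩
        have hlt : (G \ fromEdgeSet {s(x, y)}).edgeFinset.card < n := by
          rw [hedge, ← hcard]
          exact Finset.card_erase_lt_of_mem (by rwa [mem_edgeFinset])
        obtain ⟨S, hle, hT⟩ := ih _ hlt _ (by congr!) hconn'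
        exact ⟨S, hle.trans sdiff_le, hT⟩

/-- A connected graph with at most `|V| - 1` edges is a tree. -/
lemma isTree_of_card_le [Fintype V] {G : SimpleGraph V} (hc : G.Connected)
    (hcard : G.edgeFinset.card + 1 ≤ Fintype.card V) : G.IsTree := by
  obtain ⟨S, hle, hT⟩ := exists_spanning_tree G hc
  have hsub : S.edgeFinset ⊆ G.edgeFinset := edgeFinset_mono hle
  have hST := hT.card_edgeFinset
  have heq : S.edgeFinset = G.edgeFinset :=
    Finset.eq_of_subset_of_card_le hsub (by omega)
  rw [edgeFinset_inj] at heq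
  rwa [← heq]

lemma swap_edgeFinset [Fintype V] {S : SimpleGraph V} {f e : Sym2 V}
    (hf : f ∈ S.edgeSet) (he : ¬ e.IsDiag) :
    ((S \ fromEdgeSet {f}) ⊔ fromEdgeSet {e}).edgeFinset
      = insert e (S.edgeFinset.erase f) := by
  ext z
  simp only [Set.mem_toFinset, edgeSet_sup, edgeSet_sdiff, edgeSet_fromEdgeSet,
    Set.mem_union, Set.mem_diff, Set.mem_singleton_iff, Set.mem_setOf_eq,
    Finset.mem_insert, Finset.mem_erase, mem_edgeFinset]
  constructor
  · rintro (⟨hz, hz'⟩ | ⟨rfl, _⟩)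
    · exact Or.inr ⟨fun hzz => hz' ⟨hzz, S.not_isDiag_of_mem_edgeSet hz⟩, hz⟩
    · exact Or.inl rfl
  · rintro (rfl | ⟨hz', hz⟩)
    · exact Or.inr ⟨rfl, he⟩
    · exact Or.inl ⟨hz, fun hh => hz' hh.1⟩

/-- The edge-swap lemma: removing the tree edge `s(a,b)` and adding `s(u,v)`, where `u`
is on the `a`-side and `v` on the `b`-side, yields a tree. -/
lemma swap_isTree [Fintype V] {S : SimpleGraph V} (hS : S.IsTree) {u v a b : V}
    (huv : u ≠ v) (hab : S.Adj a b)
    (hua : (S \ fromEdgeSet {s(a, b)}).Reachable u a)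
    (hvb : (S \ fromEdgeSet {s(a, b)}).Reachable v b)
    (hSuv : ¬ S.Adj u v) :
    ((S \ fromEdgeSet {s(a, b)}) ⊔ fromEdgeSet {s(u, v)}).IsTree := by
  set X := (S \ fromEdgeSet {s(a, b)}) ⊔ fromEdgeSet {s(u, v)} with hX
  have hX' : S \ fromEdgeSet {s(a, b)} ≤ X := le_sup_left
  have hXuv : X.Adj u v := by
    rw [hX, sup_adj]
    exact Or.inr ((fromEdgeSet_adj _).mpr ⟨rfl, huv⟩)
  have key : ∀ x, X.Reachable x u := by
    intro x
    rcases reach_or hS.isConnected a b x with hr | hr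
    · exact (hr.mono hX').trans (hua.mono hX').symm
    · exact ((hr.mono hX').trans (hvb.mono hX').symm).trans hXuv.symm.reachable
  have hconn : X.Connected := by
    rw [connected_iff]
    exact ⟨fun s t => (key s).trans (key t).symm, hS.isConnected.nonempty⟩
  apply isTree_of_card_le hconn
  have hEF : X.edgeFinset = insert s(u, v) (S.edgeFinset.erase s(a, b)) :=
    swap_edgeFinset hab (by simpa using huv)
  have hfmem : s(a, b) ∈ S.edgeFinset := by rwa [mem_edgeFinset]
  have hnotmem : s(u, v) ∉ S.edgeFinset.erase s(a, b) := by
    intro hh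
    exact hSuv (by simpa [mem_edgeFinset] using (Finset.mem_of_mem_erase hh))
  rw [(ef_congr _ _).trans hEF, Finset.card_insert_of_notMem hnotmem,
    Finset.card_erase_of_mem hfmem]
  have h1 : 1 ≤ S.edgeFinset.card := Finset.card_pos.mpr ⟨_, hfmem⟩
  have h2 := hS.card_edgeFinset
  omega

/-- Deleting an edge of the unique path between `u` and `v` in a tree disconnects `u`
from `v`. -/
lemma not_reach_del {S : SimpleGraph V} (hS : S.IsTree) {u v : V} {p : S.Walk u v}
    (hp : p.IsPath) {f : Sym2 V} (hf : f ∈ p.edges) :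
    ¬ (S \ fromEdgeSet {f}).Reachable u v := by
  rintro ⟨q⟩
  have hsub : ∀ e ∈ q.edges, e ∈ S.edgeSet := fun e he =>
    ((edgeSet_sdiff S (fromEdgeSet {f})) ▸ q.edges_subset_edgeSet he).1
  set q' := q.transfer S hsub with hq'
  have hpq : p = (q'.toPath : S.Walk u v) :=
    (hS.existsUnique_path u v).unique hp q'.toPath.2
  have hf' : f ∈ q'.edges := q'.edges_toPath_subset (hpq ▸ hf)
  rw [hq', q.edges_transfer hsub] at hf'
  have := q.edges_subset_edgeSet hf'
  rw [edgeSet_sdiff, edgeSet_fromEdgeSet] at this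
  have hfS : f ∈ S.edgeSet := p.edges_subset_edgeSet hf
  exact this.2 ⟨rfl, S.not_isDiag_of_mem_edgeSet hfS⟩

end MaxSpanningTreeAux

open MaxSpanningTreeAux Finset in
/-- A spanning tree `S` of a connected weighted graph `G` is a maximum-weight spanning
tree iff every non-tree edge has weight at most the weight of every edge on the unique
cycle formed by adding it to `S` (equivalently, every edge of the unique tree path
between its endpoints). -/
theorem maximal_spanningTree_iff {V : Type*} [Fintype V] (G S : SimpleGraph V)
    (w : Sym2 V → ℝ) (hG : G.Connected) (hSG : S ≤ G) (hS : S.IsTree) :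
    (∀ T : SimpleGraph V, T ≤ G → T.IsTree →
        ∑ e ∈ T.edgeFinset, w e ≤ ∑ e ∈ S.edgeFinset, w e) ↔
    (∀ u v : V, G.Adj u v → ¬ S.Adj u v →
        ∀ p : S.Walk u v, p.IsPath → ∀ f ∈ p.edges, w s(u, v) ≤ w f) := by
  constructor
  · -- maximality → cycle condition
    intro hmax u v hGuv hSuv p hp f hf
    have huv : u ≠ v := hGuv.ne
    have hfS : f ∈ S.edgeSet := p.edges_subset_edgeSet hf
    -- pick endpoints of f matching sides of u, v
    have hnr_uv : ¬ (S \ fromEdgeSet {f}).Reachable u v := not_reach_del hS hp hf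
    obtain ⟨a, b, hfab⟩ : ∃ a b, f = s(a, b) := ⟨f.out.1, f.out.2, f.out_eq.symm⟩
    subst hfab
    have hab : S.Adj a b := p.adj_of_mem_edges hf
    have hnr_ab : ¬ (S \ fromEdgeSet {s(a, b)}).Reachable a b := by
      have := hS.IsAcyclic
      rw [isAcyclic_iff_forall_adj_isBridge] at this
      exact this hab
    -- decide which side u and v are on
    have hbuild : ∃ a' b', s(a', b') = s(a, b) ∧ S.Adj a' b' ∧
        (S \ fromEdgeSet {s(a, b)}).Reachable u a' ∧
        (S \ fromEdgeSet {s(a, b)}).Reachable v b' := by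
      rcases reach_or hS.isConnected a b u with hu' | hu' <;>
        rcases reach_or hS.isConnected a b v with hv' | hv'
      · exact absurd (hu'.trans hv'.symm) hnr_uv
      · exact ⟨a, b, rfl, hab, hu', hv'⟩
      · exact ⟨b, a, Sym2.eq_swap, hab.symm, hu', hv'⟩
      · exact absurd (hu'.trans hv'.symm) hnr_uv
    obtain ⟨a', b', hswap, hab', hua, hvb⟩ := hbuild
    have hT : ((S \ fromEdgeSet {s(a', b')}) ⊔ fromEdgeSet {s(u, v)}).IsTree := by
      refine swap_isTree hS huv hab' ?_ ?_ hSuv <;> rw [hswap] <;> assumption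
    rw [hswap] at hT
    set T := (S \ fromEdgeSet {s(a, b)}) ⊔ fromEdgeSet {s(u, v)} with hTdef
    have hTG : T ≤ G := by
      apply sup_le (le_trans sdiff_le hSG)
      intro x y hxy
      obtain ⟨hm, hne⟩ := (fromEdgeSet_adj _).mp hxy
      rw [Set.mem_singleton_iff, Sym2.eq_iff] at hm
      rcases hm with ⟨rfl, rfl⟩ | ⟨rfl, rfl⟩
      · exact hGuv
      · exact hGuv.symm
    have hEF : T.edgeFinset = insert s(u, v) (S.edgeFinset.erase s(a, b)) :=
      swap_edgeFinset hfS (by simpa using huv)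
    have hsum := hmax T hTG hT
    rw [(ef_congr _ _).trans hEF] at hsum
    have hfmem : s(a, b) ∈ S.edgeFinset := by rwa [mem_edgeFinset]
    have hnotmem : s(u, v) ∉ S.edgeFinset.erase s(a, b) := by
      intro hh
      exact hSuv (by simpa [mem_edgeFinset] using (Finset.mem_of_mem_erase hh))
    rw [Finset.sum_insert hnotmem, Finset.sum_erase_eq_sub hfmem] at hsum
    linarith
  · -- cycle condition → maximality
    intro hcyc
    suffices H : ∀ (n : ℕ) (T : SimpleGraph V), (T.edgeFinset \ S.edgeFinset).card = n →
        T ≤ G → T.IsTree → ∑ e ∈ T.edgeFinset, w e ≤ ∑ e ∈ S.edgeFinset, w e by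
      intro T hTG hT
      exact H _ T rfl hTG hT
    intro n
    induction n using Nat.strong_induction_on with
    | _ n ih =>
      intro T hn hTG hT
      rcases Nat.eq_zero_or_pos n with rfl | hpos
      · -- no extra edges: T = S
        have hsub : T.edgeFinset ⊆ S.edgeFinset := by
          intro e he
          by_contra hne
          have : e ∈ T.edgeFinset \ S.edgeFinset := Finset.mem_sdiff.mpr ⟨he, hne⟩
          rw [Finset.card_eq_zero.mp hn] at this
          simp at this
        have hcards : S.edgeFinset.card ≤ T.edgeFinset.card := by
          have h1 := hS.card_edgeFinset
          have h2 := hT.card_edgeFinset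
          omega
        have : T.edgeFinset = S.edgeFinset := Finset.eq_of_subset_of_card_le hsub hcards
        rw [this]
      · -- pick an edge of T not in S and exchange it
        obtain ⟨e, he⟩ : ∃ e, e ∈ T.edgeFinset \ S.edgeFinset := by
          rcases Finset.card_pos.mp (hn ▸ hpos) with ⟨e, he⟩
          exact ⟨e, he⟩
        rw [Finset.mem_sdiff, mem_edgeFinset, mem_edgeFinset] at he
        obtain ⟨heT, heS⟩ := he
        obtain ⟨u, v, rfl⟩ : ∃ u v, e = s(u, v) := ⟨e.out.1, e.out.2, e.out_eq.symm⟩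
        have hTuv : T.Adj u v := heT
        have hSuv : ¬ S.Adj u v := heS
        have hGuv : G.Adj u v := hTG hTuv
        obtain ⟨p, hp, -⟩ := hS.existsUnique_path u v
        have hwle : ∀ f ∈ p.edges, w s(u, v) ≤ w f := hcyc u v hGuv hSuv p hp
        -- the deleted-edge sides in T
        have hQv : ¬ (T \ fromEdgeSet {s(u, v)}).Reachable v u := by
          have := hT.IsAcyclic
          rw [isAcyclic_iff_forall_adj_isBridge] at this
          exact fun hr => (this hTuv) hr.symm
        obtain ⟨a, b, hSab, hmem, hQa, hQb⟩ :=
          exists_cross (fun x => (T \ fromEdgeSet {s(u, v)}).Reachable x u) p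
            (Reachable.refl u) hQv
        have hfS : s(a, b) ∈ S.edgeSet := hSab
        have hfne : s(a, b) ≠ s(u, v) := by
          intro hh
          rw [hh] at hfS
          exact hSuv hfS
        have hTab : ¬ T.Adj a b := by
          intro hadj
          apply hQb
          refine Reachable.trans ?_ hQa
          refine Adj.reachable ?_
          rw [sdiff_adj]
          refine ⟨hadj.symm, fun hK => ?_⟩
          obtain ⟨hm, -⟩ := (fromEdgeSet_adj _).mp hK
          rw [Set.mem_singleton_iff] at hm
          exact hfne (Sym2.eq_swap.trans hm)
        have hbv : (T \ fromEdgeSet {s(u, v)}).Reachable b v := by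
          rcases reach_or hT.isConnected u v b with hr | hr
          · exact absurd hr hQb
          · exact hr
        -- build the exchanged tree
        have hT' : ((T \ fromEdgeSet {s(u, v)}) ⊔ fromEdgeSet {s(a, b)}).IsTree :=
          swap_isTree hT hSab.ne hTuv hQa hbv hTab
        set T' := (T \ fromEdgeSet {s(u, v)}) ⊔ fromEdgeSet {s(a, b)} with hT'def
        have hT'G : T' ≤ G := by
          apply sup_le (le_trans sdiff_le hTG)
          intro x y hxy
          obtain ⟨hm, hne⟩ := (fromEdgeSet_adj _).mp hxy
          rw [Set.mem_singleton_iff, Sym2.eq_iff] at hm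
          rcases hm with ⟨rfl, rfl⟩ | ⟨rfl, rfl⟩
          · exact hSG hSab
          · exact (hSG hSab).symm
        have hEF : T'.edgeFinset = insert s(a, b) (T.edgeFinset.erase s(u, v)) :=
          swap_edgeFinset heT (by simpa using hSab.ne)
        have hemem : s(u, v) ∈ T.edgeFinset := by rwa [mem_edgeFinset]
        have hnotmem : s(a, b) ∉ T.edgeFinset.erase s(u, v) := by
          intro hh
          exact hTab (by simpa [mem_edgeFinset] using (Finset.mem_of_mem_erase hh))
        -- measure decreases
        have hmeas : (T'.edgeFinset \ S.edgeFinset).card < n := by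
          have hset : T'.edgeFinset \ S.edgeFinset
              = (T.edgeFinset \ S.edgeFinset).erase s(u, v) := by
            ext z
            simp only [hEF, Finset.mem_sdiff, Finset.mem_insert, Finset.mem_erase]
            constructor
            · rintro ⟨rfl | ⟨hz1, hz2⟩, hz3⟩
              · exact absurd (mem_edgeFinset.mpr hfS) hz3
              · exact ⟨hz1, hz2, hz3⟩
            · rintro ⟨hz1, hz2, hz3⟩
              exact ⟨Or.inr ⟨hz1, hz2⟩, hz3⟩
          rw [hset, ← hn]
          apply Finset.card_erase_lt_of_mem
          rw [Finset.mem_sdiff, mem_edgeFinset, mem_edgeFinset]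
          exact ⟨heT, heS⟩
        have hsum' := ih _ hmeas T' (by congr!) hT'G hT'
        rw [(ef_congr _ _).trans hEF, Finset.sum_insert hnotmem, Finset.sum_erase_eq_sub hemem] at hsum'
        have hwle' : w s(u, v) ≤ w s(a, b) := hwle _ hmem
        linarith
end

section
/- Let S be a maximal spanning tree of a connected weighted graph G. For any threshold t, the connected components of the subgraph of S consisting of edges of weight ≥ t coincide with the connected components of the Edge complex Edge(t) of G (restricted to vertices). -/
open SimpleGraph
open scoped Classical

private lemma walk_reach_or {V : Type*} {S : SimpleGraph V} {c d : V} :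
    ∀ {x y : V} (_ : S.Walk x y),
      (S.deleteEdges {s(c,d)}).Reachable x y ∨
      (S.deleteEdges {s(c,d)}).Reachable x c ∨ (S.deleteEdges {s(c,d)}).Reachable x d := by
  intro x y q
  induction q with
  | nil => exact Or.inl (Reachable.refl _)
  | @cons u z y h q ih =>
    by_cases he : s(u, z) = s(c, d)
    · rw [Sym2.eq_iff] at he
      rcases he with ⟨rfl, rfl⟩ | ⟨rfl, rfl⟩
      · exact Or.inr (Or.inl (Reachable.refl _))
      · exact Or.inr (Or.inr (Reachable.refl _))
    · have hadj : (S.deleteEdges {s(c,d)}).Adj u z := by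
        rw [deleteEdges_adj]
        exact ⟨h, by simpa using he⟩
      rcases ih with r | r | r
      · exact Or.inl (hadj.reachable.trans r)
      · exact Or.inr (Or.inl (hadj.reachable.trans r))
      · exact Or.inr (Or.inr (hadj.reachable.trans r))

private lemma preconn_lift {V : Type*} {S T : SimpleGraph V} {c d : V}
    (hle : S.deleteEdges {s(c,d)} ≤ T) (hcd : T.Reachable c d) :
    ∀ {x y : V} (_ : S.Walk x y), T.Reachable x y := by
  intro x y q
  induction q with
  | nil => exact Reachable.refl _
  | @cons u z y h q ih =>
    by_cases he : s(u, z) = s(c, d)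
    · rw [Sym2.eq_iff] at he
      rcases he with ⟨rfl, rfl⟩ | ⟨rfl, rfl⟩
      · exact hcd.trans ih
      · exact hcd.symm.trans ih
    · have hadj : T.Adj u z := hle (by rw [deleteEdges_adj]; exact ⟨h, by simpa using he⟩)
      exact hadj.reachable.trans ih

set_option maxHeartbeats 2000000 in
private lemma key_exchange {V : Type*} [Fintype V] {G S : SimpleGraph V} {w : Sym2 V → ℝ}
    (hSG : S ≤ G) (hS : S.IsTree)
    (hmax : ∀ T : SimpleGraph V, T ≤ G → T.IsTree →
        ∑ e ∈ T.edgeFinset, w e ≤ ∑ e ∈ S.edgeFinset, w e)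
    {a b : V} (hab : G.Adj a b) {c d : V}
    {p : S.Walk a b} (hp : p.IsPath) (hf : s(c,d) ∈ p.edges)
    (hw : w s(c,d) < w s(a,b)) : False := by
  have hfS : s(c,d) ∈ S.edgeSet := p.edges_subset_edgeSet hf
  have hne : a ≠ b := hab.ne
  set D := S.deleteEdges {s(c,d)} with hDdef
  have hDle : D ≤ S := deleteEdges_le _
  -- S is not adjacent to a b
  have habS : s(a,b) ∉ S.edgeSet := by
    intro h
    rw [mem_edgeSet] at h
    obtain ⟨q, hq, huniq⟩ := hS.existsUnique_path a b
    have h1 := huniq p hp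
    have h2 := huniq _ (Path.singleton h).2
    rw [h1, ← h2] at hf
    simp only [Path.singleton, Walk.edges_cons, Walk.edges_nil, List.mem_singleton] at hf
    rw [hf] at hw
    exact lt_irrefl _ hw
  -- a and b are not reachable in D
  have hDab : ¬ D.Reachable a b := by
    rintro ⟨q⟩
    have hqS : ∀ e ∈ q.edges, e ∈ S.edgeSet :=
      fun e he => edgeSet_mono hDle (q.edges_subset_edgeSet he)
    have hfq : s(c,d) ∉ q.edges := by
      intro h
      have := q.edges_subset_edgeSet h
      rw [hDdef, edgeSet_deleteEdges] at this
      exact this.2 rfl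
    obtain ⟨r, hr, huniq⟩ := hS.existsUnique_path a b
    have h1 := huniq p hp
    have h2 := huniq _ (q.transfer S hqS).toPath.2
    rw [h1, ← h2] at hf
    have := Walk.edges_toPath_subset _ hf
    rw [Walk.edges_transfer] at this
    exact hfq this
  -- reachability of a, b to c or d in D
  have ha := walk_reach_or (c := c) (d := d) (hS.isConnected.preconnected a b).some
  have hb := walk_reach_or (c := c) (d := d) (hS.isConnected.preconnected b a).some
  have ha' : D.Reachable a c ∨ D.Reachable a d := by
    rcases ha with h | h | h
    · exact absurd h hDab
    · exact Or.inl h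
    · exact Or.inr h
  have hb' : D.Reachable b c ∨ D.Reachable b d := by
    rcases hb with h | h | h
    · exact absurd h.symm hDab
    · exact Or.inl h
    · exact Or.inr h
  -- the exchanged graph T
  set T := SimpleGraph.fromEdgeSet (insert s(a,b) (S.edgeSet \ {s(c,d)})) with hTdef
  have hTedge : T.edgeSet = insert s(a,b) (S.edgeSet \ {s(c,d)}) := by
    rw [hTdef, edgeSet_fromEdgeSet]
    ext e
    simp only [Set.mem_diff, Set.mem_setOf_eq]
    refine ⟨fun h => h.1, fun h => ⟨h, ?_⟩⟩
    rcases h with rfl | h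
    · simpa using hne
    · exact S.not_isDiag_of_mem_edgeSet h.1
  have hDT : D ≤ T := by
    rw [← edgeSet_subset_edgeSet, hTedge, hDdef, edgeSet_deleteEdges]
    exact fun e he => Set.mem_insert_of_mem _ he
  have hTab : T.Adj a b := by
    rw [hTdef, fromEdgeSet_adj]
    exact ⟨Set.mem_insert _ _, hne⟩
  have hTG : T ≤ G := by
    rw [← edgeSet_subset_edgeSet, hTedge]
    rintro e (rfl | he)
    · exact hab
    · exact edgeSet_mono hSG he.1
  -- T reaches c to d
  have hTcd : T.Reachable c d := by
    rcases ha' with hac | had <;> rcases hb' with hbc | hbd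
    · exact absurd (hac.trans hbc.symm) hDab
    · exact ((hac.mono hDT).symm.trans hTab.reachable).trans (hbd.mono hDT)
    · exact ((hbc.mono hDT).symm.trans hTab.symm.reachable).trans (had.mono hDT)
    · exact absurd (had.trans hbd.symm) hDab
  -- T connected
  have hTconn : T.Connected := by
    rw [connected_iff]
    refine ⟨fun x y => ?_, hS.isConnected.nonempty⟩
    exact preconn_lift hDT hTcd (hS.isConnected.preconnected x y).some
  -- T acyclic
  have hTbridge : ¬ (T \ SimpleGraph.fromEdgeSet {s(a,b)}).Reachable a b := by
    rw [show T \ SimpleGraph.fromEdgeSet {s(a,b)} = T.deleteEdges {s(a,b)} from rfl,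
      reachable_deleteEdges_iff_exists_walk]
    rintro ⟨q, hq⟩
    apply hDab
    refine ⟨q.transfer D fun e he => ?_⟩
    have h1 := q.edges_subset_edgeSet he
    rw [hTedge] at h1
    rcases h1 with rfl | h1
    · exact absurd he hq
    · rw [hDdef, edgeSet_deleteEdges]; exact h1
  have hTacyc : T.IsAcyclic := by
    intro x q hq
    have hnb : s(a,b) ∉ q.edges :=
      ((isBridge_iff_adj_and_forall_cycle_notMem hTab).mp (isBridge_iff.mpr hTbridge)) q hq
    have hsub : ∀ e ∈ q.edges, e ∈ S.edgeSet := by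
      intro e he
      have h1 := q.edges_subset_edgeSet he
      rw [hTedge] at h1
      rcases h1 with rfl | h1
      · exact absurd he hnb
      · exact h1.1
    exact hS.IsAcyclic (q.transfer S hsub) (hq.transfer hsub)
  have hTtree : T.IsTree := ⟨hTconn, hTacyc⟩
  -- edge finset
  have hTfin : ∀ inst : Fintype T.edgeSet,
      @SimpleGraph.edgeFinset _ T inst = insert s(a,b) (S.edgeFinset.erase s(c,d)) := by
    intro inst
    ext e
    simp only [mem_edgeFinset, hTedge, Set.mem_insert_iff, Set.mem_diff,
      Set.mem_singleton_iff, Finset.mem_insert, Finset.mem_erase, mem_edgeFinset]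
    tauto
  have habnotin : s(a,b) ∉ S.edgeFinset.erase s(c,d) := by
    intro h
    exact habS (mem_edgeFinset.mp (Finset.mem_of_mem_erase h))
  have hfmem : s(c,d) ∈ S.edgeFinset := mem_edgeFinset.mpr hfS
  have h2 := hmax T hTG hTtree
  rw [hTfin _, Finset.sum_insert habnotin, Finset.sum_erase_eq_sub hfmem] at h2
  linarith

/-- For a maximum-weight spanning tree `S` of a connected weighted graph `G` and any
threshold `t`, the connected components of the subgraph of `S` with edges of weight `≥ t`
coincide with those of the edge complex `Edge(t)` of `G`. -/
theorem maximal_spanningTree_edgeComplex_components {V : Type*} [Fintype V]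
    (G S : SimpleGraph V) (w : Sym2 V → ℝ) (hG : G.Connected) (hSG : S ≤ G)
    (hS : S.IsTree)
    (hmax : ∀ T : SimpleGraph V, T ≤ G → T.IsTree →
        ∑ e ∈ T.edgeFinset, w e ≤ ∑ e ∈ S.edgeFinset, w e)
    (t : ℝ) (u v : V) :
    (SimpleGraph.fromEdgeSet {e ∈ S.edgeSet | t ≤ w e}).Reachable u v ↔
      (SimpleGraph.fromEdgeSet {e ∈ G.edgeSet | t ≤ w e}).Reachable u v := by
  constructor
  · exact fun h => h.mono (fromEdgeSet_mono fun e he => ⟨edgeSet_mono hSG he.1, he.2⟩)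
  · -- key: adjacent vertices in G with heavy edge are reachable in the heavy part of S
    have key : ∀ a b : V, G.Adj a b → t ≤ w s(a,b) →
        (SimpleGraph.fromEdgeSet {e ∈ S.edgeSet | t ≤ w e}).Reachable a b := by
      intro a b hab hwt
      obtain ⟨p, hp, -⟩ := hS.existsUnique_path a b
      have hheavy : ∀ e ∈ p.edges, e ∈ (SimpleGraph.fromEdgeSet
          {e ∈ S.edgeSet | t ≤ w e}).edgeSet := by
        intro e he
        have heS := p.edges_subset_edgeSet he
        have hwe : w s(a,b) ≤ w e := by
          by_contra hcon
          push_neg at hcon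
          revert he hcon
          induction e using Sym2.ind with
          | _ c d =>
            intro he hcon
            exact key_exchange hSG hS hmax hab hp he hcon
        rw [edgeSet_fromEdgeSet]
        exact ⟨⟨heS, le_trans hwt hwe⟩, S.not_isDiag_of_mem_edgeSet heS⟩
      exact (p.transfer _ hheavy).reachable
    rintro ⟨q⟩
    induction q with
    | nil => exact Reachable.refl _
    | @cons x z y h q ih =>
      rw [fromEdgeSet_adj] at h
      exact (key x z h.1.1 h.1.2).trans ih
end

section
/- For any two vertices u, v of a connected weighted graph G, the maximum over all u–v paths of the minimum edge weight along the path is achieved by the unique u–v path in any maximal spanning tree of G. -/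
open SimpleGraph
open scoped Classical

/-- After deleting the edge `s(a,b)` from `S`, every vertex reachable in `S` from a vertex on one
of the two sides is still reachable from `a` or from `b`. -/
private lemma aux_side {V : Type*} {S : SimpleGraph V} {a b x z : V}
    (W : S.Walk x z)
    (hx : (S \ fromEdgeSet {s(a,b)}).Reachable a x ∨ (S \ fromEdgeSet {s(a,b)}).Reachable b x) :
    (S \ fromEdgeSet {s(a,b)}).Reachable a z ∨ (S \ fromEdgeSet {s(a,b)}).Reachable b z := by
  induction W with
  | nil => exact hx
  | @cons s t r h W ih =>
    apply ih
    by_cases he : s(s, t) = s(a, b)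
    · rw [Sym2.eq_iff] at he
      rcases he with ⟨rfl, rfl⟩ | ⟨rfl, rfl⟩
      · exact Or.inr (Reachable.refl _)
      · exact Or.inl (Reachable.refl _)
    · have hadj : (S \ fromEdgeSet {s(a,b)}).Adj s t := by
        rw [sdiff_adj, fromEdgeSet_adj]
        exact ⟨h, fun hc => he hc.1⟩
      exact hx.imp (fun hr => hr.trans hadj.reachable) (fun hr => hr.trans hadj.reachable)

/-- If a trail in `S` from `u` to `v` uses the edge `s(a,b)`, then after deleting that edge,
`u` is reachable from one endpoint and `v` from the other. -/
private lemma aux_cut {V : Type*} {S : SimpleGraph V} {a b u v : V}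
    (W : S.Walk u v) (hW : W.IsTrail) (he : s(a,b) ∈ W.edges) :
    ((S \ fromEdgeSet {s(a,b)}).Reachable u a ∧ (S \ fromEdgeSet {s(a,b)}).Reachable b v) ∨
    ((S \ fromEdgeSet {s(a,b)}).Reachable u b ∧ (S \ fromEdgeSet {s(a,b)}).Reachable a v) := by
  induction W with
  | nil => simp at he
  | @cons s t r h W ih =>
    rw [Walk.isTrail_cons] at hW
    rw [Walk.edges_cons, List.mem_cons] at he
    rcases he with he | he
    · -- the first edge is s(a,b); the rest avoids it
      have hnot : s(a,b) ∉ W.edges := by rw [he]; exact hW.2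
      have hsub : ∀ e ∈ W.edges, e ∈ (S \ fromEdgeSet {s(a,b)}).edgeSet := by
        intro e heW
        rw [edgeSet_sdiff, edgeSet_fromEdgeSet, Set.mem_diff]
        refine ⟨W.edges_subset_edgeSet heW, ?_⟩
        rintro ⟨rfl, -⟩
        exact hnot heW
      have hr : (S \ fromEdgeSet {s(a,b)}).Reachable t r := ⟨W.transfer _ hsub⟩
      rw [Sym2.eq_iff] at he
      rcases he with ⟨rfl, rfl⟩ | ⟨rfl, rfl⟩
      · exact Or.inl ⟨Reachable.refl _, hr⟩
      · exact Or.inr ⟨Reachable.refl _, hr⟩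
    · have hne : s(s, t) ≠ s(a, b) := fun hc => hW.2 (hc ▸ he)
      have hadj : (S \ fromEdgeSet {s(a,b)}).Adj s t := by
        rw [sdiff_adj, fromEdgeSet_adj]
        exact ⟨h, fun hc => hne hc.1⟩
      rcases ih hW.1 he with ⟨h1, h2⟩ | ⟨h1, h2⟩
      · exact Or.inl ⟨hadj.reachable.trans h1, h2⟩
      · exact Or.inr ⟨hadj.reachable.trans h1, h2⟩

/-- A walk from a vertex satisfying `P` to one not satisfying `P` contains a crossing edge. -/
private lemma aux_cross {V : Type*} {G : SimpleGraph V} {P : V → Prop} {x y : V}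
    (q : G.Walk x y) :
    P x → ¬ P y → ∃ s t, G.Adj s t ∧ s(s,t) ∈ q.edges ∧ P s ∧ ¬ P t := by
  induction q with
  | nil => exact fun h h' => absurd h h'
  | @cons s t r h W ih =>
    intro hx hy
    by_cases ht : P t
    · obtain ⟨s', t', h1, h2, h3, h4⟩ := ih ht hy
      exact ⟨s', t', h1, by rw [Walk.edges_cons]; exact List.mem_cons_of_mem _ h2, h3, h4⟩
    · exact ⟨s, t, h, by simp, hx, ht⟩

/-- The unique path between two vertices in a maximum-weight spanning tree achieves
the maximum, over all paths in `G` between them, of the minimum edge weight along the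
path: its bottleneck is at least the bottleneck of any walk in `G`. -/
theorem maximal_spanningTree_bottleneck {V : Type*} [Fintype V] (G S : SimpleGraph V)
    (w : Sym2 V → ℝ) (hG : G.Connected) (hSG : S ≤ G) (hS : S.IsTree)
    (hmax : ∀ T : SimpleGraph V, T ≤ G → T.IsTree →
        ∑ e ∈ T.edgeFinset, w e ≤ ∑ e ∈ S.edgeFinset, w e)
    (u v : V) (p : S.Walk u v) (hp : p.IsPath) :
    ∀ q : G.Walk u v, ∀ c : ℝ, (∀ f ∈ q.edges, c ≤ w f) → ∀ f ∈ p.edges, c ≤ w f := by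
  by_contra hcon
  push_neg at hcon
  obtain ⟨q, c, hq, f, hfp, hfw⟩ := hcon
  induction f using Sym2.ind with
  | _ a b =>
  have hab : S.Adj a b := p.adj_of_mem_edges hfp
  -- `S'` is the tree with the light edge removed
  set S' : SimpleGraph V := S \ fromEdgeSet {s(a,b)} with hS'def
  have hbridge : ¬ S'.Reachable a b :=
    ((isAcyclic_iff_forall_adj_isBridge.mp hS.2) hab)
  -- every vertex is reachable in S' from a or from b
  have hside : ∀ z, S'.Reachable a z ∨ S'.Reachable b z := by
    intro z
    obtain ⟨W⟩ := hS.1.preconnected a z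
    exact aux_side W (Or.inl (Reachable.refl a))
  -- find a crossing edge of q for the cut P = reachable-from-a in S'
  have hcross : ∃ x y, G.Adj x y ∧ s(x,y) ∈ q.edges ∧
      S'.Reachable a x ∧ ¬ S'.Reachable a y := by
    rcases aux_cut p hp.isTrail hfp with ⟨h1, h2⟩ | ⟨h1, h2⟩
    · have hPu : S'.Reachable a u := h1.symm
      have hPv : ¬ S'.Reachable a v := fun h => hbridge (h.trans h2.symm)
      exact aux_cross q hPu hPv
    · have hPv : S'.Reachable a v := h2
      have hPu : ¬ S'.Reachable a u := fun h => hbridge (h.trans h1)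
      obtain ⟨x, y, h1', h2', h3', h4'⟩ := aux_cross q.reverse hPv hPu
      rw [Walk.edges_reverse, List.mem_reverse] at h2'
      exact ⟨x, y, h1', h2', h3', h4'⟩
  obtain ⟨x, y, hxy, hxyq, hPx, hPy⟩ := hcross
  have hcw : c ≤ w s(x,y) := hq _ hxyq
  have hne : s(x,y) ≠ s(a,b) := fun h => by rw [h] at hcw; linarith
  have hS'nadj : ¬ S'.Adj x y := fun h => hPy (hPx.trans h.reachable)
  have hSnadj : ¬ S.Adj x y := fun h => hS'nadj (by
    rw [hS'def, sdiff_adj, fromEdgeSet_adj]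
    exact ⟨h, fun hc => hne hc.1⟩)
  have hxyne : x ≠ y := hxy.ne
  -- the exchanged graph
  set T : SimpleGraph V := S' ⊔ fromEdgeSet {s(x,y)} with hTdef
  have hTxyadj : T.Adj x y := by
    rw [hTdef, sup_adj, fromEdgeSet_adj]
    exact Or.inr ⟨rfl, hxyne⟩
  have hTG : T ≤ G := by
    apply sup_le ((sdiff_le : S' ≤ S).trans hSG)
    intro z z' hzz'
    rw [fromEdgeSet_adj, Set.mem_singleton_iff, Sym2.eq_iff] at hzz'
    rcases hzz'.1 with ⟨rfl, rfl⟩ | ⟨rfl, rfl⟩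
    · exact hxy
    · exact hxy.symm
  have hS'T : S' ≤ T := le_sup_left
  -- connectivity of T
  have hyb : S'.Reachable b y := (hside y).resolve_left hPy
  have hTreach : ∀ z, T.Reachable x z := by
    intro z
    rcases hside z with h | h
    · exact (hPx.symm.trans h).mono hS'T
    · exact (hTxyadj.reachable).trans (((hyb.symm.trans h)).mono hS'T)
  haveI : Nonempty V := ⟨x⟩
  have hTconn : T.Connected := Connected.mk fun s t => (hTreach s).symm.trans (hTreach t)
  -- acyclicity of T
  have hS'ac : S'.IsAcyclic := fun v0 cyc hcyc =>
    hS.2 (cyc.mapLe (sdiff_le : S' ≤ S)) (hcyc.mapLe _)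
  have hTac : T.IsAcyclic := by
    intro v0 cyc hcyc
    by_cases hin : s(x,y) ∈ cyc.edges
    · have hreach : (T \ fromEdgeSet {s(x,y)}).Reachable x y :=
        (adj_and_reachable_delete_edges_iff_exists_cycle.mpr ⟨v0, cyc, hcyc, hin⟩).2
      have hle : T \ fromEdgeSet {s(x,y)} ≤ S' := by
        intro z z' hzz'
        rw [sdiff_adj, hTdef, sup_adj] at hzz'
        rcases hzz'.1 with h | h
        · exact h
        · exact absurd h hzz'.2
      exact hPy (hPx.trans (hreach.mono hle))
    · have hsub : ∀ e ∈ cyc.edges, e ∈ S'.edgeSet := by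
        intro e he
        have := cyc.edges_subset_edgeSet he
        rw [hTdef, edgeSet_sup, edgeSet_fromEdgeSet] at this
        rcases this with h | h
        · exact h
        · exact absurd h.1 (fun hc => hin (hc ▸ he))
      exact hS'ac (cyc.transfer S' hsub) (hcyc.transfer hsub)
  -- edge sets
  have habS : s(a,b) ∈ S.edgeFinset := by rwa [mem_edgeFinset, mem_edgeSet]
  have hxyS : s(x,y) ∉ S.edgeFinset := by rwa [mem_edgeFinset, mem_edgeSet]
  have hTedge : T.edgeFinset = insert s(x,y) (S.edgeFinset.erase s(a,b)) := by
    ext e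
    rw [Finset.mem_insert, Finset.mem_erase, mem_edgeFinset, mem_edgeFinset,
      hTdef, edgeSet_sup, hS'def, edgeSet_sdiff, edgeSet_fromEdgeSet, edgeSet_fromEdgeSet]
    have hxd : ¬ (s(x,y) : Sym2 V).IsDiag := by simp [hxyne]
    have had : ¬ (s(a,b) : Sym2 V).IsDiag := by simp [hab.ne]
    constructor
    · rintro (⟨heS, hne'⟩ | ⟨rfl, -⟩)
      · refine Or.inr ⟨?_, heS⟩
        rintro rfl
        exact hne' ⟨rfl, had⟩
      · exact Or.inl rfl
    · rintro (rfl | ⟨hne', heS⟩)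
      · exact Or.inr ⟨rfl, hxd⟩
      · exact Or.inl ⟨heS, fun hc => hne' hc.1⟩
  -- weight comparison
  have hsum : ∑ e ∈ T.edgeFinset, w e
      = w s(x,y) + (∑ e ∈ S.edgeFinset, w e - w s(a,b)) := by
    rw [hTedge, Finset.sum_insert (by simp [hxyS]), Finset.sum_erase_eq_sub habS]
  have hle := hmax T hTG ⟨hTconn, hTac⟩
  have hle' : ∑ e ∈ T.edgeFinset, w e ≤ ∑ e ∈ S.edgeFinset, w e := by
    convert hle using 2
    exact Finset.coe_injective (by rw [coe_edgeFinset, coe_edgeFinset])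
  rw [hsum] at hle'
  linarith
end
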